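/- For all m ≥ 1, the Frobenius number G_o(m) of the set {o_m, o_{m+1}, o_{m+2}, …} of odious numbers ≥ o_m satisfies 4m ≤ G_o(m) ≤ 6m − 1. -/

import Mathlib

/-- The Thue–Morse sequence: parity of the binary digit sum of `n`. -/
def tm (n : ℕ) : ℕ := (Nat.digits 2 n).sum % 2

/-- The `n`-th odious number. -/
def odiousSeq (n : ℕ) : ℕ := 2 * n + 1 - tm n

lemma tm_le_one (n : ℕ) : tm n ≤ 1 := by unfold tm; omega

lemma tm_even (n : ℕ) : tm (2*n) = tm n := by
  rcases Nat.eq_zero_or_pos n with h|h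
  · simp [h]
  · rw [tm, Nat.digits_def' (by norm_num : 1 < 2) (by omega)]
    have h1 : (2*n) % 2 = 0 := by omega
    have h2 : (2*n) / 2 = n := by omega
    rw [h1, h2]; simp [tm]

lemma tm_odd (n : ℕ) : tm (2*n+1) = 1 - tm n := by
  rw [tm, Nat.digits_def' (by norm_num : 1 < 2) (by omega)]
  have h1 : (2*n+1) % 2 = 1 := by omega
  have h2 : (2*n+1) / 2 = n := by omega
  rw [h1, h2]
  simp only [List.sum_cons]
  have := tm_le_one n
  unfold tm at *
  omega

/-- There exist `i + j = s` with `tm i = a`, `tm j = b`, `i ≥ l1`, `j ≥ l0`. -/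
def EP (a b s l1 l0 : ℕ) : Prop :=
  ∃ i j : ℕ, l1 ≤ i ∧ l0 ≤ j ∧ i + j = s ∧ tm i = a ∧ tm j = b

lemma EP.mono {a b s l1 l0 a' b' s' l1' l0' : ℕ} (h : EP a b s l1 l0)
    (hs : s = s') (h1 : l1' ≤ l1) (h0 : l0' ≤ l0) (ha : a = a') (hb : b = b') :
    EP a' b' s' l1' l0' := by
  obtain ⟨i, j, hi, hj, hij, hti, htj⟩ := h
  exact ⟨i, j, le_trans h1 hi, le_trans h0 hj, by omega, by omega, by omega⟩

lemma EP.swap {a b s l1 l0 : ℕ} (h : EP a b s l1 l0) : EP b a s l0 l1 := by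
  obtain ⟨i, j, hi, hj, hij, hti, htj⟩ := h
  exact ⟨j, i, hj, hi, by omega, htj, hti⟩

lemma EP.lift_ee {a b s l1 l0 : ℕ} (h : EP a b s l1 l0) :
    EP a b (2*s) (2*l1) (2*l0) := by
  obtain ⟨i, j, hi, hj, hij, hti, htj⟩ := h
  exact ⟨2*i, 2*j, by omega, by omega, by omega, by rw [tm_even]; exact hti,
    by rw [tm_even]; exact htj⟩

lemma EP.lift_oo {a b s l1 l0 : ℕ} (h : EP a b s l1 l0) :
    EP (1-a) (1-b) (2*s+2) (2*l1+1) (2*l0+1) := by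
  obtain ⟨i, j, hi, hj, hij, hti, htj⟩ := h
  exact ⟨2*i+1, 2*j+1, by omega, by omega, by omega, by rw [tm_odd, hti],
    by rw [tm_odd, htj]⟩

lemma EP.lift_eo {a b s l1 l0 : ℕ} (h : EP a b s l1 l0) :
    EP a (1-b) (2*s+1) (2*l1) (2*l0+1) := by
  obtain ⟨i, j, hi, hj, hij, hti, htj⟩ := h
  exact ⟨2*i, 2*j+1, by omega, by omega, by omega, by rw [tm_even]; exact hti,
    by rw [tm_odd, htj]⟩

lemma EP.lift_oe {a b s l1 l0 : ℕ} (h : EP a b s l1 l0) :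
    EP (1-a) b (2*s+1) (2*l1+1) (2*l0) := by
  obtain ⟨i, j, hi, hj, hij, hti, htj⟩ := h
  exact ⟨2*i+1, 2*j, by omega, by omega, by omega, by rw [tm_odd, hti],
    by rw [tm_even]; exact htj⟩

lemma EP.reorder {a s l l2 : ℕ} (h : EP a a s l l) (h2 : 2*l2 ≤ s) :
    EP a a s l2 l := by
  obtain ⟨i, j, hi, hj, hij, hti, htj⟩ := h
  rcases le_total i j with hle|hle
  · exact ⟨j, i, by omega, by omega, by omega, htj, hti⟩
  · exact ⟨i, j, by omega, hj, hij, hti, htj⟩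

/-- The exceptional families. -/
def Fam (u : ℕ) : Prop :=
  ∃ a : ℕ, u + 1 = 2^a ∨ u + 1 = 3*2^a ∨ u + 1 = 7*2^a ∨ u + 1 = 9*2^a

lemma pow2_mod3 : ∀ a : ℕ, (a % 2 = 0 → 2^a % 3 = 1) ∧ (a % 2 = 1 → 2^a % 3 = 2) := by
  intro a
  induction a with
  | zero => simp
  | succ n ih =>
    have hp : 2^(n+1) = 2 * 2^n := by rw [pow_succ]; ring
    constructor <;> intro h
    · have h2 := ih.2 (by omega); omega
    · have h1 := ih.1 (by omega); omega

lemma fam_odd {u : ℕ} (h10 : 10 ≤ u) (hf : Fam u) : u % 2 = 1 := by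
  obtain ⟨a, h⟩ := hf
  cases a with
  | zero => simp at h; omega
  | succ b =>
    rw [pow_succ] at h
    have : 0 ≤ 2^b := Nat.zero_le _
    omega

lemma fam_double {w : ℕ} (hf : Fam w) : Fam (2*w+1) := by
  obtain ⟨a, h⟩ := hf
  exact ⟨a+1, by rw [pow_succ]; omega⟩

lemma fam_half {u : ℕ} (h : Fam u) (hbig : 10 ≤ u) : Fam ((u-1)/2) := by
  obtain ⟨a, ha⟩ := h
  cases a with
  | zero => simp at ha; omega
  | succ b =>
    rw [pow_succ] at ha
    exact ⟨b, by omega⟩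

lemma tm_fam (c : ℕ) (hc : 1 ≤ c) : ∀ a, tm (c * 2^a - 1) = (tm (c-1) + a) % 2 := by
  intro a
  induction a with
  | zero => simp; have := tm_le_one (c-1); omega
  | succ n ih =>
    have hpos : 1 ≤ c * 2^n := Nat.one_le_iff_ne_zero.mpr (by positivity)
    have h1 : c * 2^(n+1) - 1 = 2*(c*2^n - 1)+1 := by rw [pow_succ]; ring_nf; omega
    rw [h1, tm_odd, ih]
    have := tm_le_one (c-1)
    omega
lemma tmv0 : tm 0 = 0 := by norm_num [tm]
lemma tmv1 : tm 1 = 1 := by norm_num [tm]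
lemma tmv2 : tm 2 = 1 := by norm_num [tm]
lemma tmv3 : tm 3 = 0 := by norm_num [tm]
lemma tmv4 : tm 4 = 1 := by norm_num [tm]
lemma tmv5 : tm 5 = 0 := by norm_num [tm]
lemma tmv6 : tm 6 = 0 := by norm_num [tm]
lemma tmv7 : tm 7 = 1 := by norm_num [tm]
lemma tmv8 : tm 8 = 1 := by norm_num [tm]
lemma tmv9 : tm 9 = 0 := by norm_num [tm]
lemma tmv10 : tm 10 = 0 := by norm_num [tm]
lemma tmv11 : tm 11 = 1 := by norm_num [tm]
lemma tmv12 : tm 12 = 0 := by norm_num [tm]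
lemma tmv13 : tm 13 = 1 := by norm_num [tm]
lemma tmv14 : tm 14 = 1 := by norm_num [tm]
lemma tmv15 : tm 15 = 0 := by norm_num [tm]
lemma tmv16 : tm 16 = 1 := by norm_num [tm]
lemma tmv17 : tm 17 = 0 := by norm_num [tm]
lemma tmv18 : tm 18 = 0 := by norm_num [tm]
lemma tmv19 : tm 19 = 1 := by norm_num [tm]
lemma tmv20 : tm 20 = 0 := by norm_num [tm]
lemma tmv21 : tm 21 = 1 := by norm_num [tm]
lemma tmv22 : tm 22 = 1 := by norm_num [tm]
lemma tmv23 : tm 23 = 0 := by norm_num [tm]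
lemma tmv24 : tm 24 = 0 := by norm_num [tm]
lemma tmv25 : tm 25 = 1 := by norm_num [tm]
lemma tmv26 : tm 26 = 1 := by norm_num [tm]
lemma tmv27 : tm 27 = 0 := by norm_num [tm]
lemma tmv28 : tm 28 = 1 := by norm_num [tm]
lemma tmv29 : tm 29 = 0 := by norm_num [tm]
lemma tmv30 : tm 30 = 0 := by norm_num [tm]
lemma tmv31 : tm 31 = 1 := by norm_num [tm]
lemma tmv32 : tm 32 = 1 := by norm_num [tm]
lemma tmv33 : tm 33 = 0 := by norm_num [tm]
lemma tmv34 : tm 34 = 0 := by norm_num [tm]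
lemma tmv35 : tm 35 = 1 := by norm_num [tm]
lemma tmv36 : tm 36 = 0 := by norm_num [tm]
lemma tmv37 : tm 37 = 1 := by norm_num [tm]
lemma tmv38 : tm 38 = 1 := by norm_num [tm]
lemma tmv39 : tm 39 = 0 := by norm_num [tm]
lemma tmv40 : tm 40 = 0 := by norm_num [tm]
lemma tmv41 : tm 41 = 1 := by norm_num [tm]
lemma tmv42 : tm 42 = 1 := by norm_num [tm]
lemma tmv43 : tm 43 = 0 := by norm_num [tm]
lemma tmv44 : tm 44 = 1 := by norm_num [tm]
lemma tmv45 : tm 45 = 0 := by norm_num [tm]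
lemma tmv46 : tm 46 = 0 := by norm_num [tm]
lemma tmv47 : tm 47 = 1 := by norm_num [tm]
lemma tmv48 : tm 48 = 0 := by norm_num [tm]
lemma tmv49 : tm 49 = 1 := by norm_num [tm]
lemma tmv50 : tm 50 = 1 := by norm_num [tm]
lemma tmv51 : tm 51 = 0 := by norm_num [tm]
lemma tmv52 : tm 52 = 1 := by norm_num [tm]
lemma tmv53 : tm 53 = 0 := by norm_num [tm]
lemma tmv54 : tm 54 = 0 := by norm_num [tm]
lemma tmv55 : tm 55 = 1 := by norm_num [tm]
lemma tmv56 : tm 56 = 1 := by norm_num [tm]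
lemma tmv57 : tm 57 = 0 := by norm_num [tm]
lemma tmv58 : tm 58 = 0 := by norm_num [tm]
lemma tmv59 : tm 59 = 1 := by norm_num [tm]
lemma tmv60 : tm 60 = 0 := by norm_num [tm]
lemma tmv61 : tm 61 = 1 := by norm_num [tm]
lemma tmv62 : tm 62 = 1 := by norm_num [tm]
lemma tmv63 : tm 63 = 0 := by norm_num [tm]
lemma tmv64 : tm 64 = 1 := by norm_num [tm]
lemma tmv65 : tm 65 = 0 := by norm_num [tm]
lemma tmv66 : tm 66 = 0 := by norm_num [tm]
lemma tmv67 : tm 67 = 1 := by norm_num [tm]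
lemma tmv68 : tm 68 = 0 := by norm_num [tm]
lemma tmv69 : tm 69 = 1 := by norm_num [tm]
lemma tmv70 : tm 70 = 1 := by norm_num [tm]
lemma tmv71 : tm 71 = 0 := by norm_num [tm]
lemma tmv72 : tm 72 = 0 := by norm_num [tm]
lemma tmv73 : tm 73 = 1 := by norm_num [tm]
lemma tmv74 : tm 74 = 1 := by norm_num [tm]
lemma tmv75 : tm 75 = 0 := by norm_num [tm]
lemma tmv76 : tm 76 = 1 := by norm_num [tm]
lemma tmv77 : tm 77 = 0 := by norm_num [tm]
lemma tmv78 : tm 78 = 0 := by norm_num [tm]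
lemma tmv79 : tm 79 = 1 := by norm_num [tm]
lemma tmv80 : tm 80 = 0 := by norm_num [tm]
lemma tmv81 : tm 81 = 1 := by norm_num [tm]
lemma tmv82 : tm 82 = 1 := by norm_num [tm]
lemma tmv83 : tm 83 = 0 := by norm_num [tm]
lemma tmv84 : tm 84 = 1 := by norm_num [tm]
lemma tmv85 : tm 85 = 0 := by norm_num [tm]
lemma tmv86 : tm 86 = 0 := by norm_num [tm]
lemma tmv87 : tm 87 = 1 := by norm_num [tm]
lemma tmv88 : tm 88 = 1 := by norm_num [tm]
lemma tmv89 : tm 89 = 0 := by norm_num [tm]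
lemma tmv90 : tm 90 = 0 := by norm_num [tm]

lemma main_base : ∀ u, 40 ≤ u → u < 84 → ¬ Fam u →
    (EP 0 0 u (u/3+2) (u/3+2) ∧ EP 1 1 u (u/3+2) (u/3+2) ∧ EP 1 0 u (u/3+2) (u/3+2)) := by
  intro u h1 h2 hnf
  have hc : u = 40 ∨ u = 41 ∨ u = 42 ∨ u = 43 ∨ u = 44 ∨ u = 45 ∨ u = 46 ∨ u = 47 ∨ u = 48 ∨ u = 49 ∨ u = 50 ∨ u = 51 ∨ u = 52 ∨ u = 53 ∨ u = 54 ∨ u = 55 ∨ u = 56 ∨ u = 57 ∨ u = 58 ∨ u = 59 ∨ u = 60 ∨ u = 61 ∨ u = 62 ∨ u = 63 ∨ u = 64 ∨ u = 65 ∨ u = 66 ∨ u = 67 ∨ u = 68 ∨ u = 69 ∨ u = 70 ∨ u = 71 ∨ u = 72 ∨ u = 73 ∨ u = 74 ∨ u = 75 ∨ u = 76 ∨ u = 77 ∨ u = 78 ∨ u = 79 ∨ u = 80 ∨ u = 81 ∨ u = 82 ∨ u = 83 := by omega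
  rcases hc with rfl|rfl|rfl|rfl|rfl|rfl|rfl|rfl|rfl|rfl|rfl|rfl|rfl|rfl|rfl|rfl|rfl|rfl|rfl|rfl|rfl|rfl|rfl|rfl|rfl|rfl|rfl|rfl|rfl|rfl|rfl|rfl|rfl|rfl|rfl|rfl|rfl|rfl|rfl|rfl|rfl|rfl|rfl|rfl
  · exact ⟨⟨17, 23, by omega, by omega, by omega, tmv17, tmv23⟩, ⟨19, 21, by omega, by omega, by omega, tmv19, tmv21⟩, ⟨16, 24, by omega, by omega, by omega, tmv16, tmv24⟩⟩
  · exact ⟨⟨17, 24, by omega, by omega, by omega, tmv17, tmv24⟩, ⟨16, 25, by omega, by omega, by omega, tmv16, tmv25⟩, ⟨21, 20, by omega, by omega, by omega, tmv21, tmv20⟩⟩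
  · exact ⟨⟨18, 24, by omega, by omega, by omega, tmv18, tmv24⟩, ⟨16, 26, by omega, by omega, by omega, tmv16, tmv26⟩, ⟨19, 23, by omega, by omega, by omega, tmv19, tmv23⟩⟩
  · exact ⟨⟨20, 23, by omega, by omega, by omega, tmv20, tmv23⟩, ⟨21, 22, by omega, by omega, by omega, tmv21, tmv22⟩, ⟨16, 27, by omega, by omega, by omega, tmv16, tmv27⟩⟩
  · exact ⟨⟨17, 27, by omega, by omega, by omega, tmv17, tmv27⟩, ⟨16, 28, by omega, by omega, by omega, tmv16, tmv28⟩, ⟨21, 23, by omega, by omega, by omega, tmv21, tmv23⟩⟩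
  · exact ⟨⟨18, 27, by omega, by omega, by omega, tmv18, tmv27⟩, ⟨19, 26, by omega, by omega, by omega, tmv19, tmv26⟩, ⟨21, 24, by omega, by omega, by omega, tmv21, tmv24⟩⟩
  · exact ⟨⟨17, 29, by omega, by omega, by omega, tmv17, tmv29⟩, ⟨21, 25, by omega, by omega, by omega, tmv21, tmv25⟩, ⟨19, 27, by omega, by omega, by omega, tmv19, tmv27⟩⟩
  · exact absurd (⟨4, by norm_num⟩ : Fam 47) hnf
  · exact ⟨⟨18, 30, by omega, by omega, by omega, tmv18, tmv30⟩, ⟨22, 26, by omega, by omega, by omega, tmv22, tmv26⟩, ⟨19, 29, by omega, by omega, by omega, tmv19, tmv29⟩⟩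
  · exact ⟨⟨20, 29, by omega, by omega, by omega, tmv20, tmv29⟩, ⟨21, 28, by omega, by omega, by omega, tmv21, tmv28⟩, ⟨19, 30, by omega, by omega, by omega, tmv19, tmv30⟩⟩
  · exact ⟨⟨20, 30, by omega, by omega, by omega, tmv20, tmv30⟩, ⟨19, 31, by omega, by omega, by omega, tmv19, tmv31⟩, ⟨21, 29, by omega, by omega, by omega, tmv21, tmv29⟩⟩
  · exact ⟨⟨24, 27, by omega, by omega, by omega, tmv24, tmv27⟩, ⟨19, 32, by omega, by omega, by omega, tmv19, tmv32⟩, ⟨21, 30, by omega, by omega, by omega, tmv21, tmv30⟩⟩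
  · exact ⟨⟨23, 29, by omega, by omega, by omega, tmv23, tmv29⟩, ⟨21, 31, by omega, by omega, by omega, tmv21, tmv31⟩, ⟨19, 33, by omega, by omega, by omega, tmv19, tmv33⟩⟩
  · exact ⟨⟨20, 33, by omega, by omega, by omega, tmv20, tmv33⟩, ⟨21, 32, by omega, by omega, by omega, tmv21, tmv32⟩, ⟨19, 34, by omega, by omega, by omega, tmv19, tmv34⟩⟩
  · exact ⟨⟨20, 34, by omega, by omega, by omega, tmv20, tmv34⟩, ⟨22, 32, by omega, by omega, by omega, tmv22, tmv32⟩, ⟨21, 33, by omega, by omega, by omega, tmv21, tmv33⟩⟩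
  · exact absurd (⟨3, by norm_num⟩ : Fam 55) hnf
  · exact ⟨⟨20, 36, by omega, by omega, by omega, tmv20, tmv36⟩, ⟨21, 35, by omega, by omega, by omega, tmv21, tmv35⟩, ⟨22, 34, by omega, by omega, by omega, tmv22, tmv34⟩⟩
  · exact ⟨⟨23, 34, by omega, by omega, by omega, tmv23, tmv34⟩, ⟨22, 35, by omega, by omega, by omega, tmv22, tmv35⟩, ⟨21, 36, by omega, by omega, by omega, tmv21, tmv36⟩⟩
  · exact ⟨⟨24, 34, by omega, by omega, by omega, tmv24, tmv34⟩, ⟨21, 37, by omega, by omega, by omega, tmv21, tmv37⟩, ⟨22, 36, by omega, by omega, by omega, tmv22, tmv36⟩⟩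
  · exact ⟨⟨23, 36, by omega, by omega, by omega, tmv23, tmv36⟩, ⟨21, 38, by omega, by omega, by omega, tmv21, tmv38⟩, ⟨25, 34, by omega, by omega, by omega, tmv25, tmv34⟩⟩
  · exact ⟨⟨24, 36, by omega, by omega, by omega, tmv24, tmv36⟩, ⟨22, 38, by omega, by omega, by omega, tmv22, tmv38⟩, ⟨26, 34, by omega, by omega, by omega, tmv26, tmv34⟩⟩
  · exact ⟨⟨27, 34, by omega, by omega, by omega, tmv27, tmv34⟩, ⟨26, 35, by omega, by omega, by omega, tmv26, tmv35⟩, ⟨22, 39, by omega, by omega, by omega, tmv22, tmv39⟩⟩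
  · exact ⟨⟨23, 39, by omega, by omega, by omega, tmv23, tmv39⟩, ⟨25, 37, by omega, by omega, by omega, tmv25, tmv37⟩, ⟨22, 40, by omega, by omega, by omega, tmv22, tmv40⟩⟩
  · exact absurd (⟨6, by norm_num⟩ : Fam 63) hnf
  · exact ⟨⟨24, 40, by omega, by omega, by omega, tmv24, tmv40⟩, ⟨26, 38, by omega, by omega, by omega, tmv26, tmv38⟩, ⟨25, 39, by omega, by omega, by omega, tmv25, tmv39⟩⟩
  · exact ⟨⟨29, 36, by omega, by omega, by omega, tmv29, tmv36⟩, ⟨28, 37, by omega, by omega, by omega, tmv28, tmv37⟩, ⟨25, 40, by omega, by omega, by omega, tmv25, tmv40⟩⟩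
  · exact ⟨⟨27, 39, by omega, by omega, by omega, tmv27, tmv39⟩, ⟨25, 41, by omega, by omega, by omega, tmv25, tmv41⟩, ⟨26, 40, by omega, by omega, by omega, tmv26, tmv40⟩⟩
  · exact ⟨⟨24, 43, by omega, by omega, by omega, tmv24, tmv43⟩, ⟨25, 42, by omega, by omega, by omega, tmv25, tmv42⟩, ⟨28, 39, by omega, by omega, by omega, tmv28, tmv39⟩⟩
  · exact ⟨⟨29, 39, by omega, by omega, by omega, tmv29, tmv39⟩, ⟨26, 42, by omega, by omega, by omega, tmv26, tmv42⟩, ⟨25, 43, by omega, by omega, by omega, tmv25, tmv43⟩⟩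
  · exact ⟨⟨29, 40, by omega, by omega, by omega, tmv29, tmv40⟩, ⟨25, 44, by omega, by omega, by omega, tmv25, tmv44⟩, ⟨26, 43, by omega, by omega, by omega, tmv26, tmv43⟩⟩
  · exact ⟨⟨27, 43, by omega, by omega, by omega, tmv27, tmv43⟩, ⟨26, 44, by omega, by omega, by omega, tmv26, tmv44⟩, ⟨25, 45, by omega, by omega, by omega, tmv25, tmv45⟩⟩
  · exact absurd (⟨3, by norm_num⟩ : Fam 71) hnf
  · exact ⟨⟨27, 45, by omega, by omega, by omega, tmv27, tmv45⟩, ⟨28, 44, by omega, by omega, by omega, tmv28, tmv44⟩, ⟨26, 46, by omega, by omega, by omega, tmv26, tmv46⟩⟩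
  · exact ⟨⟨27, 46, by omega, by omega, by omega, tmv27, tmv46⟩, ⟨26, 47, by omega, by omega, by omega, tmv26, tmv47⟩, ⟨28, 45, by omega, by omega, by omega, tmv28, tmv45⟩⟩
  · exact ⟨⟨29, 45, by omega, by omega, by omega, tmv29, tmv45⟩, ⟨32, 42, by omega, by omega, by omega, tmv32, tmv42⟩, ⟨26, 48, by omega, by omega, by omega, tmv26, tmv48⟩⟩
  · exact ⟨⟨27, 48, by omega, by omega, by omega, tmv27, tmv48⟩, ⟨28, 47, by omega, by omega, by omega, tmv28, tmv47⟩, ⟨32, 43, by omega, by omega, by omega, tmv32, tmv43⟩⟩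
  · exact ⟨⟨30, 46, by omega, by omega, by omega, tmv30, tmv46⟩, ⟨32, 44, by omega, by omega, by omega, tmv32, tmv44⟩, ⟨28, 48, by omega, by omega, by omega, tmv28, tmv48⟩⟩
  · exact ⟨⟨29, 48, by omega, by omega, by omega, tmv29, tmv48⟩, ⟨28, 49, by omega, by omega, by omega, tmv28, tmv49⟩, ⟨31, 46, by omega, by omega, by omega, tmv31, tmv46⟩⟩
  · exact ⟨⟨30, 48, by omega, by omega, by omega, tmv30, tmv48⟩, ⟨28, 50, by omega, by omega, by omega, tmv28, tmv50⟩, ⟨32, 46, by omega, by omega, by omega, tmv32, tmv46⟩⟩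
  · exact ⟨⟨33, 46, by omega, by omega, by omega, tmv33, tmv46⟩, ⟨32, 47, by omega, by omega, by omega, tmv32, tmv47⟩, ⟨28, 51, by omega, by omega, by omega, tmv28, tmv51⟩⟩
  · exact ⟨⟨29, 51, by omega, by omega, by omega, tmv29, tmv51⟩, ⟨28, 52, by omega, by omega, by omega, tmv28, tmv52⟩, ⟨32, 48, by omega, by omega, by omega, tmv32, tmv48⟩⟩
  · exact ⟨⟨30, 51, by omega, by omega, by omega, tmv30, tmv51⟩, ⟨31, 50, by omega, by omega, by omega, tmv31, tmv50⟩, ⟨35, 46, by omega, by omega, by omega, tmv35, tmv46⟩⟩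
  · exact ⟨⟨29, 53, by omega, by omega, by omega, tmv29, tmv53⟩, ⟨32, 50, by omega, by omega, by omega, tmv32, tmv50⟩, ⟨31, 51, by omega, by omega, by omega, tmv31, tmv51⟩⟩
  · exact ⟨⟨29, 54, by omega, by omega, by omega, tmv29, tmv54⟩, ⟨31, 52, by omega, by omega, by omega, tmv31, tmv52⟩, ⟨32, 51, by omega, by omega, by omega, tmv32, tmv51⟩⟩

lemma topA_base : ∀ u, 1 ≤ u → u < 40 → tm u = 1 → EP 1 0 u (u/3) (u/3) := by
  intro u h1 h2 htm
  have hc : u = 1 ∨ u = 2 ∨ u = 3 ∨ u = 4 ∨ u = 5 ∨ u = 6 ∨ u = 7 ∨ u = 8 ∨ u = 9 ∨ u = 10 ∨ u = 11 ∨ u = 12 ∨ u = 13 ∨ u = 14 ∨ u = 15 ∨ u = 16 ∨ u = 17 ∨ u = 18 ∨ u = 19 ∨ u = 20 ∨ u = 21 ∨ u = 22 ∨ u = 23 ∨ u = 24 ∨ u = 25 ∨ u = 26 ∨ u = 27 ∨ u = 28 ∨ u = 29 ∨ u = 30 ∨ u = 31 ∨ u = 32 ∨ u = 33 ∨ u =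 34 ∨ u = 35 ∨ u = 36 ∨ u = 37 ∨ u = 38 ∨ u = 39 := by omega
  rcases hc with rfl|rfl|rfl|rfl|rfl|rfl|rfl|rfl|rfl|rfl|rfl|rfl|rfl|rfl|rfl|rfl|rfl|rfl|rfl|rfl|rfl|rfl|rfl|rfl|rfl|rfl|rfl|rfl|rfl|rfl|rfl|rfl|rfl|rfl|rfl|rfl|rfl|rfl|rfl
  · exact ⟨1, 0, by omega, by omega, by omega, tmv1, tmv0⟩
  · exact ⟨2, 0, by omega, by omega, by omega, tmv2, tmv0⟩
  · rw [tmv3] at htm; omega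
  · exact ⟨1, 3, by omega, by omega, by omega, tmv1, tmv3⟩
  · rw [tmv5] at htm; omega
  · rw [tmv6] at htm; omega
  · exact ⟨2, 5, by omega, by omega, by omega, tmv2, tmv5⟩
  · exact ⟨2, 6, by omega, by omega, by omega, tmv2, tmv6⟩
  · rw [tmv9] at htm; omega
  · rw [tmv10] at htm; omega
  · exact ⟨8, 3, by omega, by omega, by omega, tmv8, tmv3⟩
  · rw [tmv12] at htm; omega
  · exact ⟨4, 9, by omega, by omega, by omega, tmv4, tmv9⟩
  · exact ⟨4, 10, by omega, by omega, by omega, tmv4, tmv10⟩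
  · rw [tmv15] at htm; omega
  · exact ⟨7, 9, by omega, by omega, by omega, tmv7, tmv9⟩
  · rw [tmv17] at htm; omega
  · rw [tmv18] at htm; omega
  · exact ⟨7, 12, by omega, by omega, by omega, tmv7, tmv12⟩
  · rw [tmv20] at htm; omega
  · exact ⟨11, 10, by omega, by omega, by omega, tmv11, tmv10⟩
  · exact ⟨7, 15, by omega, by omega, by omega, tmv7, tmv15⟩
  · rw [tmv23] at htm; omega
  · rw [tmv24] at htm; omega
  · exact ⟨8, 17, by omega, by omega, by omega, tmv8, tmv17⟩
  · exact ⟨8, 18, by omega, by omega, by omega, tmv8, tmv18⟩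
  · rw [tmv27] at htm; omega
  · exact ⟨11, 17, by omega, by omega, by omega, tmv11, tmv17⟩
  · rw [tmv29] at htm; omega
  · rw [tmv30] at htm; omega
  · exact ⟨11, 20, by omega, by omega, by omega, tmv11, tmv20⟩
  · exact ⟨14, 18, by omega, by omega, by omega, tmv14, tmv18⟩
  · rw [tmv33] at htm; omega
  · rw [tmv34] at htm; omega
  · exact ⟨11, 24, by omega, by omega, by omega, tmv11, tmv24⟩
  · rw [tmv36] at htm; omega
  · exact ⟨13, 24, by omega, by omega, by omega, tmv13, tmv24⟩
  · exact ⟨14, 24, by omega, by omega, by omega, tmv14, tmv24⟩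
  · rw [tmv39] at htm; omega

lemma topB_base : ∀ u, 3 ≤ u → u < 84 → tm u = 0 →
    EP 1 1 u (u/3) (u/3) ∨ EP 0 0 (u-1) (u/3) (u/3) := by
  intro u h1 h2 htm
  have hc : u = 3 ∨ u = 4 ∨ u = 5 ∨ u = 6 ∨ u = 7 ∨ u = 8 ∨ u = 9 ∨ u = 10 ∨ u = 11 ∨ u = 12 ∨ u = 13 ∨ u = 14 ∨ u = 15 ∨ u = 16 ∨ u = 17 ∨ u = 18 ∨ u = 19 ∨ u = 20 ∨ u = 21 ∨ u = 22 ∨ u = 23 ∨ u = 24 ∨ u = 25 ∨ u = 26 ∨ u = 27 ∨ u = 28 ∨ u = 29 ∨ u = 30 ∨ u = 31 ∨ u = 32 ∨ u = 33 ∨ u = 34 ∨ u = 35 ∨ u = 36 ∨ u = 37 ∨ u = 38 ∨ u = 39 ∨ u = 40 ∨ u = 41 ∨ u = 42 ∨ u = 43 ∨ u = 44 ∨ u = 45 ∨ u = 46 ∨ u = 47 ∨ u = 48 ∨ u = 49 ∨ u = 50 ∨ u = 51 ∨ u = 52 ∨ u = 53 ∨ u = 54 ∨ u = 55 ∨ u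 = 56 ∨ u = 57 ∨ u = 58 ∨ u = 59 ∨ u = 60 ∨ u = 61 ∨ u = 62 ∨ u = 63 ∨ u = 64 ∨ u = 65 ∨ u = 66 ∨ u = 67 ∨ u = 68 ∨ u = 69 ∨ u = 70 ∨ u = 71 ∨ u = 72 ∨ u = 73 ∨ u = 74 ∨ u = 75 ∨ u = 76 ∨ u = 77 ∨ u = 78 ∨ u = 79 ∨ u = 80 ∨ u = 81 ∨ u = 82 ∨ u = 83 := by omega
  rcases hc with rfl|rfl|rfl|rfl|rfl|rfl|rfl|rfl|rfl|rfl|rfl|rfl|rfl|rfl|rfl|rfl|rfl|rfl|rfl|rfl|rfl|rfl|rfl|rfl|rfl|rfl|rfl|rfl|rfl|rfl|rfl|rfl|rfl|rfl|rfl|rfl|rfl|rfl|rfl|rfl|rfl|rfl|rfl|rfl|rfl|rfl|rfl|rfl|rfl|rfl|rfl|rfl|rfl|rfl|rfl|rfl|rfl|rfl|rfl|rfl|rfl|rfl|rfl|rfl|rfl|rfl|rfl|rfl|rfl|rfl|rfl|rfl|rfl|rfl|rfl|rfl|rfl|rfl|rfl|rfl|rfl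
  · exact Or.inl ⟨1, 2, by omega, by omega, by omega, tmv1, tmv2⟩
  · rw [tmv4] at htm; omega
  · exact Or.inl ⟨1, 4, by omega, by omega, by omega, tmv1, tmv4⟩
  · exact Or.inl ⟨2, 4, by omega, by omega, by omega, tmv2, tmv4⟩
  · rw [tmv7] at htm; omega
  · rw [tmv8] at htm; omega
  · exact Or.inr ⟨3, 5, by omega, by omega, by omega, tmv3, tmv5⟩
  · exact Or.inr ⟨3, 6, by omega, by omega, by omega, tmv3, tmv6⟩
  · rw [tmv11] at htm; omega
  · exact Or.inl ⟨4, 8, by omega, by omega, by omega, tmv4, tmv8⟩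
  · rw [tmv13] at htm; omega
  · rw [tmv14] at htm; omega
  · exact Or.inl ⟨7, 8, by omega, by omega, by omega, tmv7, tmv8⟩
  · rw [tmv16] at htm; omega
  · exact Or.inr ⟨6, 10, by omega, by omega, by omega, tmv6, tmv10⟩
  · exact Or.inl ⟨7, 11, by omega, by omega, by omega, tmv7, tmv11⟩
  · rw [tmv19] at htm; omega
  · exact Or.inl ⟨7, 13, by omega, by omega, by omega, tmv7, tmv13⟩
  · rw [tmv21] at htm; omega
  · rw [tmv22] at htm; omega
  · exact Or.inl ⟨7, 16, by omega, by omega, by omega, tmv7, tmv16⟩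
  · exact Or.inl ⟨8, 16, by omega, by omega, by omega, tmv8, tmv16⟩
  · rw [tmv25] at htm; omega
  · rw [tmv26] at htm; omega
  · exact Or.inl ⟨11, 16, by omega, by omega, by omega, tmv11, tmv16⟩
  · rw [tmv28] at htm; omega
  · exact Or.inl ⟨13, 16, by omega, by omega, by omega, tmv13, tmv16⟩
  · exact Or.inl ⟨11, 19, by omega, by omega, by omega, tmv11, tmv19⟩
  · rw [tmv31] at htm; omega
  · rw [tmv32] at htm; omega
  · exact Or.inl ⟨11, 22, by omega, by omega, by omega, tmv11, tmv22⟩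
  · exact Or.inl ⟨13, 21, by omega, by omega, by omega, tmv13, tmv21⟩
  · rw [tmv35] at htm; omega
  · exact Or.inl ⟨14, 22, by omega, by omega, by omega, tmv14, tmv22⟩
  · rw [tmv37] at htm; omega
  · rw [tmv38] at htm; omega
  · exact Or.inl ⟨13, 26, by omega, by omega, by omega, tmv13, tmv26⟩
  · exact Or.inl ⟨14, 26, by omega, by omega, by omega, tmv14, tmv26⟩
  · rw [tmv41] at htm; omega
  · rw [tmv42] at htm; omega
  · exact Or.inl ⟨21, 22, by omega, by omega, by omega, tmv21, tmv22⟩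
  · rw [tmv44] at htm; omega
  · exact Or.inl ⟨19, 26, by omega, by omega, by omega, tmv19, tmv26⟩
  · exact Or.inl ⟨21, 25, by omega, by omega, by omega, tmv21, tmv25⟩
  · rw [tmv47] at htm; omega
  · exact Or.inl ⟨16, 32, by omega, by omega, by omega, tmv16, tmv32⟩
  · rw [tmv49] at htm; omega
  · rw [tmv50] at htm; omega
  · exact Or.inl ⟨19, 32, by omega, by omega, by omega, tmv19, tmv32⟩
  · rw [tmv52] at htm; omega
  · exact Or.inl ⟨21, 32, by omega, by omega, by omega, tmv21, tmv32⟩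
  · exact Or.inl ⟨19, 35, by omega, by omega, by omega, tmv19, tmv35⟩
  · rw [tmv55] at htm; omega
  · rw [tmv56] at htm; omega
  · exact Or.inl ⟨19, 38, by omega, by omega, by omega, tmv19, tmv38⟩
  · exact Or.inl ⟨21, 37, by omega, by omega, by omega, tmv21, tmv37⟩
  · rw [tmv59] at htm; omega
  · exact Or.inl ⟨22, 38, by omega, by omega, by omega, tmv22, tmv38⟩
  · rw [tmv61] at htm; omega
  · rw [tmv62] at htm; omega
  · exact Or.inl ⟨21, 42, by omega, by omega, by omega, tmv21, tmv42⟩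
  · rw [tmv64] at htm; omega
  · exact Or.inl ⟨21, 44, by omega, by omega, by omega, tmv21, tmv44⟩
  · exact Or.inl ⟨22, 44, by omega, by omega, by omega, tmv22, tmv44⟩
  · rw [tmv67] at htm; omega
  · exact Or.inl ⟨26, 42, by omega, by omega, by omega, tmv26, tmv42⟩
  · rw [tmv69] at htm; omega
  · rw [tmv70] at htm; omega
  · exact Or.inr ⟨24, 46, by omega, by omega, by omega, tmv24, tmv46⟩
  · exact Or.inl ⟨25, 47, by omega, by omega, by omega, tmv25, tmv47⟩
  · rw [tmv73] at htm; omega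
  · rw [tmv74] at htm; omega
  · exact Or.inl ⟨25, 50, by omega, by omega, by omega, tmv25, tmv50⟩
  · rw [tmv76] at htm; omega
  · exact Or.inl ⟨25, 52, by omega, by omega, by omega, tmv25, tmv52⟩
  · exact Or.inl ⟨26, 52, by omega, by omega, by omega, tmv26, tmv52⟩
  · rw [tmv79] at htm; omega
  · exact Or.inl ⟨28, 52, by omega, by omega, by omega, tmv28, tmv52⟩
  · rw [tmv81] at htm; omega
  · rw [tmv82] at htm; omega
  · exact Or.inl ⟨28, 55, by omega, by omega, by omega, tmv28, tmv55⟩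
lemma main_lemma : ∀ u, 40 ≤ u → ¬ Fam u →
    (EP 0 0 u (u/3+2) (u/3+2) ∧ EP 1 1 u (u/3+2) (u/3+2) ∧ EP 1 0 u (u/3+2) (u/3+2)) := by
  intro u
  induction u using Nat.strong_induction_on with
  | _ u IH =>
    intro h40 hnf
    by_cases hsmall : u < 84
    · exact main_base u h40 hsmall hnf
    · push_neg at hsmall
      rcases Nat.even_or_odd u with ⟨w, hw⟩ | ⟨w, hw⟩
      · -- u = 2*w
        have hw2 : u = 2*w := by omega
        by_cases hfw : Fam w
        · have hwo : w % 2 = 1 := fam_odd (by omega) hfw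
          have hnf' : ¬ Fam (w-1) := by
            intro hf'
            have := fam_odd (u := w-1) (by omega) hf'
            omega
          obtain ⟨h00, h11, h10⟩ := IH (w-1) (by omega) (by omega) hnf'
          refine ⟨?_, ?_, ?_⟩
          · exact h11.lift_oo.mono (by omega) (by omega) (by omega) (by norm_num) (by norm_num)
          · exact h00.lift_oo.mono (by omega) (by omega) (by omega) (by norm_num) (by norm_num)
          · exact h10.swap.lift_oo.mono (by omega) (by omega) (by omega) (by norm_num) (by norm_num)
        · obtain ⟨h00, h11, h10⟩ := IH w (by omega) (by omega) hfw
          refine ⟨?_, ?_, ?_⟩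
          · exact h00.lift_ee.mono (by omega) (by omega) (by omega) rfl rfl
          · exact h11.lift_ee.mono (by omega) (by omega) (by omega) rfl rfl
          · exact h10.lift_ee.mono (by omega) (by omega) (by omega) rfl rfl
      · -- u = 2*w+1
        have hw2 : u = 2*w+1 := by omega
        have hnfw : ¬ Fam w := by
          intro hf
          exact hnf (by rw [hw2]; exact fam_double hf)
        obtain ⟨h00, h11, h10⟩ := IH w (by omega) (by omega) hnfw
        refine ⟨?_, ?_, ?_⟩
        · exact h10.lift_oe.mono (by omega) (by omega) (by omega) (by norm_num) rfl
        · exact h10.lift_eo.mono (by omega) (by omega) (by omega) rfl (by norm_num)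
        · have hre := (h11.reorder (l2 := (u/3+3)/2) (by omega)).lift_eo
          exact hre.mono (by omega) (by omega) (by omega) rfl (by norm_num)

def WS (a : ℕ) : Prop :=
  (a % 2 = 1 → EP 1 0 (2^a-1) ((2^a-1)/3+1) ((2^a-1)/3+1)) ∧
  (a % 2 = 0 → EP 1 1 (2^a-1) ((2^a-1)/3+1) ((2^a-1)/3+1))

lemma wlem : ∀ a, 3 ≤ a → WS a := by
  intro a
  induction a with
  | zero => intro h; omega
  | succ n ih =>
    intro h3
    by_cases hn : 3 ≤ n
    · have ws := ih hn
      have hpow : (2:ℕ)^(n+1) = 2 * 2^n := by rw [pow_succ]; ring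
      have hpos : (8:ℕ) ≤ 2^n := by
        calc (8:ℕ) = 2^3 := by norm_num
        _ ≤ 2^n := Nat.pow_le_pow_right (by norm_num) hn
      rcases Nat.mod_two_eq_zero_or_one n with hpar | hpar
      · -- n even : child has E11, parent (n+1) odd gets E10
        have hm3 : 2^n % 3 = 1 := (pow2_mod3 n).1 hpar
        have h11 := ws.2 hpar
        refine ⟨fun _ => ?_, fun h2 => absurd h2 (by omega)⟩
        exact h11.lift_eo.mono (by omega) (by omega) (by omega) rfl (by norm_num)
      · -- n odd : child has E10, parent gets E11
        have hm3 : 2^n % 3 = 2 := (pow2_mod3 n).2 hpar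
        have h10 := ws.1 hpar
        refine ⟨fun h2 => absurd h2 (by omega), fun _ => ?_⟩
        exact h10.lift_eo.mono (by omega) (by omega) (by omega) rfl (by norm_num)
    · -- base case n+1 = 3
      have : n + 1 = 3 := by omega
      rw [this]
      constructor
      · intro _
        exact ⟨4, 3, by norm_num, by norm_num, by norm_num, tmv4, tmv3⟩
      · intro h; omega

def XS (a : ℕ) : Prop :=
  (a % 2 = 1 → EP 1 0 (7*2^a-1) ((7*2^a-1)/3+1) ((7*2^a-1)/3+1)) ∧
  (a % 2 = 0 → EP 1 1 (7*2^a-1) ((7*2^a-1)/3+1) ((7*2^a-1)/3+1))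

lemma xlem : ∀ a, 2 ≤ a → XS a := by
  intro a
  induction a with
  | zero => intro h; omega
  | succ n ih =>
    intro h2
    by_cases hn : 2 ≤ n
    · have ws := ih hn
      have hpow : (7:ℕ)*2^(n+1) = 2 * (7*2^n) := by rw [pow_succ]; ring
      have hpos : (4:ℕ) ≤ 2^n := by
        calc (4:ℕ) = 2^2 := by norm_num
        _ ≤ 2^n := Nat.pow_le_pow_right (by norm_num) hn
      rcases Nat.mod_two_eq_zero_or_one n with hpar | hpar
      · have hm3 : 2^n % 3 = 1 := (pow2_mod3 n).1 hpar
        have h11 := ws.2 hpar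
        refine ⟨fun _ => ?_, fun h2 => absurd h2 (by omega)⟩
        exact h11.lift_eo.mono (by omega) (by omega) (by omega) rfl (by norm_num)
      · have hm3 : 2^n % 3 = 2 := (pow2_mod3 n).2 hpar
        have h10 := ws.1 hpar
        refine ⟨fun h2 => absurd h2 (by omega), fun _ => ?_⟩
        exact h10.lift_eo.mono (by omega) (by omega) (by omega) rfl (by norm_num)
    · -- base n+1 = 2
      have : n + 1 = 2 := by omega
      rw [this]
      constructor
      · intro h; omega
      · intro _
        exact ⟨13, 14, by norm_num, by norm_num, by norm_num, tmv13, tmv14⟩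
def YS (a : ℕ) : Prop :=
  (a % 2 = 1 → EP 1 1 (3*2^a-1) ((3*2^a-1)/3) ((3*2^a-1)/3) ∧
      EP 1 0 (3*2^a-1) ((3*2^a-1)/3+1) ((3*2^a-1)/3+1)) ∧
  (a % 2 = 0 → EP 1 1 (3*2^a-1) ((3*2^a-1)/3+1) ((3*2^a-1)/3+1) ∧
      EP 1 0 (3*2^a-1) ((3*2^a-1)/3+1) ((3*2^a-1)/3))

lemma ylem : ∀ a, 1 ≤ a → YS a := by
  intro a
  induction a with
  | zero => intro h; omega
  | succ n ih =>
    intro h1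
    by_cases hn : 1 ≤ n
    · have ws := ih hn
      have hpow : (3:ℕ)*2^(n+1) = 2 * (3*2^n) := by rw [pow_succ]; ring
      have hpos : (2:ℕ) ≤ 2^n := by
        calc (2:ℕ) = 2^1 := by norm_num
        _ ≤ 2^n := Nat.pow_le_pow_right (by norm_num) hn
      rcases Nat.mod_two_eq_zero_or_one n with hpar | hpar
      · -- n even, n+1 odd
        obtain ⟨h11, h10⟩ := ws.2 hpar
        refine ⟨fun _ => ⟨?_, ?_⟩, fun h2 => absurd h2 (by omega)⟩
        · exact h10.lift_eo.mono (by omega) (by omega) (by omega) rfl (by norm_num)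
        · exact h11.lift_eo.mono (by omega) (by omega) (by omega) rfl (by norm_num)
      · -- n odd, n+1 even
        obtain ⟨h11, h10⟩ := ws.1 hpar
        refine ⟨fun h2 => absurd h2 (by omega), fun _ => ⟨?_, ?_⟩⟩
        · exact h10.lift_eo.mono (by omega) (by omega) (by omega) rfl (by norm_num)
        · have hre := (h11.reorder (l2 := (3*2^n-1)/3+1) (by omega)).lift_eo
          exact hre.mono (by omega) (by omega) (by omega) rfl (by norm_num)
    · have : n + 1 = 1 := by omega
      rw [this]
      refine ⟨fun _ => ⟨?_, ?_⟩, fun h2 => absurd h2 (by omega)⟩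
      · exact ⟨1, 4, by norm_num, by norm_num, by norm_num, tmv1, tmv4⟩
      · exact ⟨2, 3, by norm_num, by norm_num, by norm_num, tmv2, tmv3⟩

def ZS (a : ℕ) : Prop :=
  (a % 2 = 1 → EP 0 0 (9*2^a-1) ((9*2^a-1)/3) ((9*2^a-1)/3) ∧
      EP 1 0 (9*2^a-1) ((9*2^a-1)/3+1) ((9*2^a-1)/3+1)) ∧
  (a % 2 = 0 → EP 0 0 (9*2^a-1) ((9*2^a-1)/3+1) ((9*2^a-1)/3+1) ∧
      EP 1 0 (9*2^a-1) ((9*2^a-1)/3) ((9*2^a-1)/3+1))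

lemma zlem : ∀ a, 1 ≤ a → ZS a := by
  intro a
  induction a with
  | zero => intro h; omega
  | succ n ih =>
    intro h1
    by_cases hn : 1 ≤ n
    · have ws := ih hn
      have hpow : (9:ℕ)*2^(n+1) = 2 * (9*2^n) := by rw [pow_succ]; ring
      have hpos : (2:ℕ) ≤ 2^n := by
        calc (2:ℕ) = 2^1 := by norm_num
        _ ≤ 2^n := Nat.pow_le_pow_right (by norm_num) hn
      rcases Nat.mod_two_eq_zero_or_one n with hpar | hpar
      · -- n even, n+1 odd : child ⟨E00(+1,+1), E10(0,+1)⟩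
        obtain ⟨h00, h10⟩ := ws.2 hpar
        refine ⟨fun _ => ⟨?_, ?_⟩, fun h2 => absurd h2 (by omega)⟩
        · exact h10.swap.lift_eo.mono (by omega) (by omega) (by omega) rfl (by norm_num)
        · exact h00.lift_oe.mono (by omega) (by omega) (by omega) (by norm_num) rfl
      · -- n odd, n+1 even : child ⟨E00(0,0), E10(+1,+1)⟩
        obtain ⟨h00, h10⟩ := ws.1 hpar
        refine ⟨fun h2 => absurd h2 (by omega), fun _ => ⟨?_, ?_⟩⟩
        · exact h10.swap.lift_eo.mono (by omega) (by omega) (by omega) rfl (by norm_num)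
        · have hre := ((h00.reorder (l2 := (9*2^n-1)/3+1) (by omega)).swap).lift_oe
          exact hre.mono (by omega) (by omega) (by omega) (by norm_num) rfl
    · have : n + 1 = 1 := by omega
      rw [this]
      refine ⟨fun _ => ⟨?_, ?_⟩, fun h2 => absurd h2 (by omega)⟩
      · exact ⟨5, 12, by norm_num, by norm_num, by norm_num, tmv5, tmv12⟩
      · exact ⟨8, 9, by norm_num, by norm_num, by norm_num, tmv8, tmv9⟩
lemma topA : ∀ u, 1 ≤ u → tm u = 1 → EP 1 0 u (u/3) (u/3) := by
  intro u h1 htm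
  by_cases hsmall : u < 40
  · exact topA_base u h1 hsmall htm
  · push_neg at hsmall
    by_cases hf : Fam u
    · obtain ⟨a, hcase⟩ := hf
      rcases hcase with hc|hc|hc|hc
      · -- u + 1 = 2^a
        have htf := tm_fam 1 (by norm_num) a
        rw [show (1:ℕ)*2^a = 2^a by ring, show (1:ℕ)-1 = 0 by norm_num, tmv0] at htf
        have hu : u = 2^a - 1 := by omega
        have ha : 3 ≤ a := by
          by_contra hcon
          push_neg at hcon
          interval_cases a <;> norm_num at hc <;> omega
        have hodd : a % 2 = 1 := by rw [hu] at htm; omega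
        exact ((wlem a ha).1 hodd).mono (by omega) (by omega) (by omega) rfl rfl
      · -- u + 1 = 3*2^a
        have htf := tm_fam 3 (by norm_num) a
        rw [show (3:ℕ)-1 = 2 by norm_num, tmv2] at htf
        have hu : u = 3*2^a - 1 := by omega
        have ha : 1 ≤ a := by
          by_contra hcon
          push_neg at hcon
          interval_cases a <;> norm_num at hc <;> omega
        have heven : a % 2 = 0 := by rw [hu] at htm; omega
        exact ((ylem a ha).2 heven).2.mono (by omega) (by omega) (by omega) rfl rfl
      · -- u + 1 = 7*2^a
        have htf := tm_fam 7 (by norm_num) a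
        rw [show (7:ℕ)-1 = 6 by norm_num, tmv6] at htf
        have hu : u = 7*2^a - 1 := by omega
        have ha : 2 ≤ a := by
          by_contra hcon
          push_neg at hcon
          interval_cases a <;> norm_num at hc <;> omega
        have hodd : a % 2 = 1 := by rw [hu] at htm; omega
        exact ((xlem a ha).1 hodd).mono (by omega) (by omega) (by omega) rfl rfl
      · -- u + 1 = 9*2^a
        have htf := tm_fam 9 (by norm_num) a
        rw [show (9:ℕ)-1 = 8 by norm_num, tmv8] at htf
        have hu : u = 9*2^a - 1 := by omega
        have ha : 1 ≤ a := by
          by_contra hcon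
          push_neg at hcon
          interval_cases a <;> norm_num at hc <;> omega
        have heven : a % 2 = 0 := by rw [hu] at htm; omega
        exact ((zlem a ha).2 heven).2.mono (by omega) (by omega) (by omega) rfl rfl
    · exact (main_lemma u (by omega) hf).2.2.mono rfl (by omega) (by omega) rfl rfl

lemma topB : ∀ u, 3 ≤ u → tm u = 0 →
    EP 1 1 u (u/3) (u/3) ∨ EP 0 0 (u-1) (u/3) (u/3) := by
  intro u h3 htm
  by_cases hsmall : u < 84
  · exact topB_base u h3 hsmall htm
  · push_neg at hsmall
    by_cases hf : Fam u
    · have hodd := fam_odd (u := u) (by omega) hf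
      have hw : Fam ((u-1)/2) := fam_half hf (by omega)
      have hwodd : (u-1)/2 % 2 = 1 := fam_odd (by omega) hw
      have hnf2 : ¬ Fam ((u-1)/2 - 1) := by
        intro hff
        have := fam_odd (u := (u-1)/2-1) (by omega) hff
        omega
      have h11 := (main_lemma ((u-1)/2 - 1) (by omega) hnf2).2.1
      right
      exact h11.lift_oo.mono (by omega) (by omega) (by omega) (by norm_num) (by norm_num)
    · left
      exact (main_lemma u (by omega) hf).2.1.mono rfl (by omega) (by omega) rfl rfl

lemma lstar : ∀ k, 6 ≤ k → tm k = 0 →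
    ∃ x y, 2*(k/6) ≤ x ∧ 2*(k/6) ≤ y ∧ x + y = k ∧ tm x = 1 ∧ tm y = 1 := by
  intro k h6 htm
  rcases Nat.even_or_odd k with ⟨u, hu⟩|⟨u, hu⟩
  · have hk : k = 2*u := by omega
    have htu : tm u = 0 := by rw [hk, tm_even] at htm; exact htm
    rcases topB u (by omega) htu with ⟨i,j,hi,hj,hij,hti,htj⟩|⟨i,j,hi,hj,hij,hti,htj⟩
    · exact ⟨2*i, 2*j, by omega, by omega, by omega,
        by rw [tm_even]; exact hti, by rw [tm_even]; exact htj⟩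
    · exact ⟨2*i+1, 2*j+1, by omega, by omega, by omega,
        by rw [tm_odd, hti], by rw [tm_odd, htj]⟩
  · have hk : k = 2*u+1 := by omega
    have htu : tm u = 1 := by
      rw [hk, tm_odd] at htm
      have := tm_le_one u
      omega
    obtain ⟨i,j,hi,hj,hij,hti,htj⟩ := topA u (by omega) htu
    exact ⟨2*i, 2*j+1, by omega, by omega, by omega,
      by rw [tm_even]; exact hti, by rw [tm_odd, htj]⟩
lemma tm_odiousSeq (j : ℕ) : tm (odiousSeq j) = 1 := by
  have h := tm_le_one j
  rcases Nat.le_one_iff_eq_zero_or_eq_one.mp h with h0|h1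
  · have hv : odiousSeq j = 2*j+1 := by unfold odiousSeq; omega
    rw [hv, tm_odd, h0]
  · have hv : odiousSeq j = 2*j := by unfold odiousSeq; omega
    rw [hv, tm_even]; exact h1

lemma not_in_closure (m : ℕ) (hm : 1 ≤ m) :
    (4*m + tm m) ∉ AddSubmonoid.closure {x : ℕ | ∃ j, m ≤ j ∧ x = odiousSeq j} := by
  intro hmem
  have htmm := tm_le_one m
  have homv : odiousSeq m = 2*m+1 - tm m := rfl
  have htmN : tm (4*m + tm m) = 0 := by
    rcases Nat.le_one_iff_eq_zero_or_eq_one.mp htmm with h0|h1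
    · rw [h0, show 4*m+0 = 2*(2*m) by ring, tm_even, tm_even, h0]
    · rw [h1, show 4*m+1 = 2*(2*m)+1 by ring, tm_odd, tm_even, h1]
  have key : ∀ n ∈ AddSubmonoid.closure {x : ℕ | ∃ j, m ≤ j ∧ x = odiousSeq j},
      n = 0 ∨ (∃ j, m ≤ j ∧ n = odiousSeq j) ∨
        (2*odiousSeq m ≤ n ∧ n ≠ 4*m + tm m) := by
    intro n hn
    induction hn using AddSubmonoid.closure_induction with
    | mem x hx => exact Or.inr (Or.inl hx)
    | zero => exact Or.inl rfl
    | add x y hx hy px py =>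
      rcases px with rfl|⟨j1,hj1,rfl⟩|⟨hx1,hx2⟩
      · simpa using py
      · rcases py with rfl|⟨j2,hj2,rfl⟩|⟨hy1,hy2⟩
        · exact Or.inr (Or.inl ⟨j1, hj1, by omega⟩)
        · -- sum of two odious numbers
          refine Or.inr (Or.inr ?_)
          have h1 : odiousSeq j1 = 2*j1+1 - tm j1 := rfl
          have h2 : odiousSeq j2 = 2*j2+1 - tm j2 := rfl
          have t1 := tm_le_one j1
          have t2 := tm_le_one j2
          by_cases b1 : j1 = m
          · by_cases b2 : j2 = m
            · subst b1; subst b2; omega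
            · subst b1; omega
          · by_cases b2 : j2 = m
            · subst b2; omega
            · omega
        · -- odious + big
          refine Or.inr (Or.inr ?_)
          have h1 : odiousSeq j1 = 2*j1+1 - tm j1 := rfl
          have t1 := tm_le_one j1
          omega
      · rcases py with rfl|⟨j2,hj2,rfl⟩|⟨hy1,hy2⟩
        · exact Or.inr (Or.inr ⟨by omega, by omega⟩)
        · refine Or.inr (Or.inr ?_)
          have h2 : odiousSeq j2 = 2*j2+1 - tm j2 := rfl
          have t2 := tm_le_one j2
          omega
        · exact Or.inr (Or.inr ⟨by omega, by omega⟩)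
  rcases key _ hmem with h0|⟨j,hj,hjv⟩|⟨hb1,hb2⟩
  · omega
  · have := tm_odiousSeq j
    rw [← hjv] at this
    omega
  · exact hb2 rfl

theorem frobenius_odious_bounds (m F : ℕ) (hm : 1 ≤ m)
    (hF : FrobeniusNumber F {x : ℕ | ∃ j, m ≤ j ∧ x = odiousSeq j}) :
    4 * m ≤ F ∧ F ≤ 6 * m - 1 := by
  obtain ⟨hFnot, hFub⟩ := hF
  have hmem : ∀ x : ℕ, tm x = 1 → 2*m ≤ x →
      x ∈ {x : ℕ | ∃ j, m ≤ j ∧ x = odiousSeq j} := by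
    intro x htx hx
    rcases Nat.even_or_odd x with ⟨i, hi⟩|⟨i, hi⟩
    · refine ⟨i, by omega, ?_⟩
      have hti : tm i = 1 := by rw [show x = 2*i by omega, tm_even] at htx; exact htx
      unfold odiousSeq; omega
    · refine ⟨i, by omega, ?_⟩
      have hti : tm i = 0 := by
        rw [show x = 2*i+1 by omega, tm_odd] at htx
        have := tm_le_one i; omega
      unfold odiousSeq; omega
  have hrepr : ∀ k, 6*m ≤ k →
      k ∈ AddSubmonoid.closure {x : ℕ | ∃ j, m ≤ j ∧ x = odiousSeq j} := by
    intro k hk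
    rcases Nat.le_one_iff_eq_zero_or_eq_one.mp (tm_le_one k) with h0|h1'
    · obtain ⟨x, y, hx, hy, hxy, htx, hty⟩ := lstar k (by omega) h0
      have hx' := hmem x htx (by omega)
      have hy' := hmem y hty (by omega)
      have := AddSubmonoid.add_mem _ (AddSubmonoid.subset_closure hx')
        (AddSubmonoid.subset_closure hy')
      rwa [hxy] at this
    · exact AddSubmonoid.subset_closure (hmem k h1' (by omega))
  constructor
  · have hNle := hFub (not_in_closure m hm)
    have := tm_le_one m
    omega
  · by_contra hcon
    push_neg at hcon
    exact hFnot (hrepr F (by omega))
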